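/- Let G ≅ ℤ² act freely, properly discontinuously, and by translations on the Euclidean plane 𝔼². Then for every line L through a point x₀ in the G-orbit and every ε > 0, R > 0, there is g ∈ G with g ≠ 1, d(x₀, g x₀) > R, and the angle at x₀ between the segment [x₀, g x₀] and L is less than ε. -/

import Mathlib

open InnerProductGeometry Real

local notation "E" => EuclideanSpace ℝ (Fin 2)

private lemma T_eq (T : (ℤ × ℤ) →+ E) (g : ℤ × ℤ) :
    T g = (g.1 : ℝ) • T (1,0) + (g.2 : ℝ) • T (0,1) := by
  have h : g = g.1 • ((1:ℤ),(0:ℤ)) + g.2 • ((0:ℤ),(1:ℤ)) := by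
    ext <;> simp
  rw [Int.cast_smul_eq_zsmul, Int.cast_smul_eq_zsmul, ← map_zsmul, ← map_zsmul, ← map_add, ← h]

private lemma lin_indep (T : (ℤ × ℤ) →+ E) (hfree : Function.Injective T)
    (hproper : ∀ R : ℝ, {g : ℤ × ℤ | ‖T g‖ ≤ R}.Finite) :
    LinearIndependent ℝ ![T (1,0), T (0,1)] := by
  set a := T (1,0) with ha
  set b := T (0,1) with hb
  have ha0 : a ≠ 0 := by
    intro h
    have h1 : T (1,0) = T 0 := by simpa [ha] using h
    have := hfree h1
    simp at this
  rw [LinearIndependent.pair_iff]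
  by_contra hcon
  push_neg at hcon
  obtain ⟨s, t, hst, hne⟩ := hcon
  -- b = r • a for some r (if t ≠ 0), else a = 0
  have hb_eq : ∃ r : ℝ, b = r • a := by
    rcases eq_or_ne t 0 with ht | ht
    · exfalso
      subst ht
      have hs : s ≠ 0 := by tauto
      apply ha0
      have : s • a = 0 := by simpa using hst
      simpa [hs] using (smul_eq_zero.mp this)
    · refine ⟨-s / t, ?_⟩
      have h2 : t • b = (-s) • a := by
        rw [neg_smul, eq_neg_iff_add_eq_zero, add_comm]
        exact hst
      calc b = t⁻¹ • (t • b) := by rw [smul_smul, inv_mul_cancel₀ ht, one_smul]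
        _ = t⁻¹ • ((-s) • a) := by rw [h2]
        _ = (-s / t) • a := by rw [smul_smul]; congr 1; field_simp
  obtain ⟨r, hr⟩ := hb_eq
  -- the set {(-⌊n r⌋, n)} is infinite but all have norm ≤ ‖a‖
  have hsub : Set.range (fun n : ℤ => ((-⌊(n : ℝ) * r⌋, n) : ℤ × ℤ)) ⊆
      {g : ℤ × ℤ | ‖T g‖ ≤ ‖a‖} := by
    rintro _ ⟨n, rfl⟩
    simp only [Set.mem_setOf_eq]
    rw [T_eq T, ← ha, ← hb, hr, smul_smul, ← add_smul]
    have : ((-⌊(n : ℝ) * r⌋ : ℤ) : ℝ) + (n : ℝ) * r = Int.fract ((n : ℝ) * r) := by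
      rw [Int.fract]; push_cast; ring
    rw [this, norm_smul]
    have h1 : |Int.fract ((n:ℝ) * r)| ≤ 1 :=
      le_of_lt (by rw [abs_of_nonneg (Int.fract_nonneg _)]; exact Int.fract_lt_one _)
    calc ‖Int.fract ((n:ℝ) * r)‖ * ‖a‖ ≤ 1 * ‖a‖ := by
          apply mul_le_mul_of_nonneg_right _ (norm_nonneg _)
          simpa [Real.norm_eq_abs] using h1
      _ = ‖a‖ := one_mul _
  have hinf : (Set.range (fun n : ℤ => ((-⌊(n : ℝ) * r⌋, n) : ℤ × ℤ))).Infinite := by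
    apply Set.infinite_range_of_injective
    intro m n h
    exact (Prod.mk.injEq _ _ _ _).mp h |>.2
  exact hinf ((hproper ‖a‖).subset hsub)

/-- Let `G ≅ ℤ²` act freely, properly discontinuously by translations on
the Euclidean plane (encoded by an injective homomorphism `T : ℤ × ℤ →+ ℝ²` with
finitely many elements of bounded translation norm; the action is `g • x = x + T g`).
Then for every line `L` through a point `x₀` with direction `v ≠ 0` and every
`ε > 0`, `R > 0`, there is `g ≠ 1` with `d(x₀, g x₀) > R` and the angle at `x₀`
between the segment `[x₀, g x₀]` and `L` less than `ε`. -/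
theorem orbit_points_near_direction
    (T : (ℤ × ℤ) →+ EuclideanSpace ℝ (Fin 2))
    (hfree : Function.Injective T)
    (hproper : ∀ R : ℝ, {g : ℤ × ℤ | ‖T g‖ ≤ R}.Finite)
    (x₀ v : EuclideanSpace ℝ (Fin 2)) (hv : v ≠ 0)
    (ε R : ℝ) (hε : 0 < ε) (hR : 0 < R) :
    ∃ g : ℤ × ℤ, g ≠ 0 ∧ R < dist x₀ (x₀ + T g) ∧
      min (InnerProductGeometry.angle (T g) v)
        (InnerProductGeometry.angle (T g) (-v)) < ε := by
  set a := T (1,0) with ha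
  set b := T (0,1) with hb
  have hli := lin_indep T hfree hproper
  -- basis of ℝ²
  have hcard : Fintype.card (Fin 2) = Module.finrank ℝ (EuclideanSpace ℝ (Fin 2)) := by
    simp [finrank_euclideanSpace_fin]
  let B : Module.Basis (Fin 2) ℝ (EuclideanSpace ℝ (Fin 2)) :=
    basisOfLinearIndependentOfCardEqFinrank hli hcard
  have hB : ∀ i, B i = ![a, b] i := by
    intro i; rw [show B = _ from rfl, coe_basisOfLinearIndependentOfCardEqFinrank]
  -- covering constant
  set C : ℝ := ‖a‖ + ‖b‖ with hC
  have ha0 : a ≠ 0 := by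
    intro h
    have h1 : T (1,0) = T 0 := by simpa [ha] using h
    have := hfree h1
    simp at this
  have hC0 : 0 < C := by
    have := norm_pos_iff.mpr ha0
    have := norm_nonneg b
    linarith
  have hcover : ∀ p : EuclideanSpace ℝ (Fin 2), ∃ g : ℤ × ℤ, ‖T g - p‖ ≤ C := by
    intro p
    set α := B.repr p 0 with hα
    set β := B.repr p 1 with hβ
    refine ⟨(⌊α⌋, ⌊β⌋), ?_⟩
    have hp : p = α • a + β • b := by
      conv_lhs => rw [← B.sum_repr p]
      rw [Fin.sum_univ_two, hB 0, hB 1]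
      simp [hα, hβ]
    rw [T_eq T, ← ha, ← hb, hp]
    have : ((⌊α⌋ : ℝ) • a + (⌊β⌋ : ℝ) • b) - (α • a + β • b)
        = (-(Int.fract α)) • a + (-(Int.fract β)) • b := by
      rw [Int.fract, Int.fract]
      module
    rw [this]
    calc ‖(-(Int.fract α)) • a + (-(Int.fract β)) • b‖
        ≤ ‖(-(Int.fract α)) • a‖ + ‖(-(Int.fract β)) • b‖ := norm_add_le _ _
      _ ≤ 1 * ‖a‖ + 1 * ‖b‖ := by
          rw [norm_smul, norm_smul]
          gcongr
          · simpa [Real.norm_eq_abs, abs_of_nonneg (Int.fract_nonneg α)] using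
              le_of_lt (Int.fract_lt_one α)
          · simpa [Real.norm_eq_abs, abs_of_nonneg (Int.fract_nonneg β)] using
              le_of_lt (Int.fract_lt_one β)
      _ = C := by ring
  -- unit vector in direction v
  set u : EuclideanSpace ℝ (Fin 2) := ‖v‖⁻¹ • v with hu
  have hnu : ‖u‖ = 1 := by
    rw [hu, norm_smul, norm_inv, norm_norm, inv_mul_cancel₀ (norm_ne_zero_iff.mpr hv)]
  -- choose ε' and s
  set ε' : ℝ := min ε (π/2) with hε'
  have hε'0 : 0 < ε' := lt_min hε (by linarith [Real.pi_pos])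
  have hε'le : ε' ≤ π/2 := min_le_right _ _
  set c : ℝ := Real.cos ε' with hc
  have hc1 : c < 1 := by
    rw [hc]
    calc Real.cos ε' < Real.cos 0 := by
          apply Real.cos_lt_cos_of_nonneg_of_le_pi le_rfl
            (le_trans hε'le (by linarith [Real.pi_pos])) hε'0
      _ = 1 := Real.cos_zero
  have hc0 : 0 ≤ c := Real.cos_nonneg_of_mem_Icc ⟨by linarith, hε'le⟩
  set s : ℝ := max (R + C + 1) (C * (1 + c) / (1 - c) + C + 1) with hs
  have hs1 : R + C + 1 ≤ s := le_max_left _ _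
  have hs2 : C * (1 + c) / (1 - c) + C + 1 ≤ s := le_max_right _ _
  have hsC : C < s := by
    have : 0 ≤ C * (1 + c) / (1 - c) := div_nonneg (by positivity) (by linarith)
    linarith
  obtain ⟨g, hg⟩ := hcover (s • u)
  set w := T g with hw
  -- norm lower bound
  have hwlow : s - C ≤ ‖w‖ := by
    have h1 : ‖s • u‖ ≤ ‖w‖ + ‖w - s • u‖ := by
      calc ‖s • u‖ = ‖w - (w - s • u)‖ := by congr 1; abel
        _ ≤ ‖w‖ + ‖w - s • u‖ := norm_sub_le _ _
    have h2 : ‖s • u‖ = s := by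
      rw [norm_smul, hnu, Real.norm_eq_abs, abs_of_pos (by linarith : (0:ℝ) < s), mul_one]
    linarith [hg, h1, h2]
  have hwR : R < ‖w‖ := by linarith
  have hw0 : w ≠ 0 := by
    intro h; rw [h] at hwR; simp at hwR; linarith
  have hg0 : g ≠ 0 := by
    intro h; apply hw0; rw [hw, h, map_zero]
  -- inner product lower bound
  have hinner : s - C ≤ inner ℝ w u := by
    have h1 : (inner ℝ w u : ℝ) = inner ℝ (s • u) u + inner ℝ (w - s • u) u := by
      rw [← inner_add_left]; congr 1; abel
    have h2 : (inner ℝ (s • u) u : ℝ) = s := by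
      rw [real_inner_smul_left, real_inner_self_eq_norm_mul_norm, hnu]
      ring
    have h3 : -(C:ℝ) ≤ inner ℝ (w - s • u) u := by
      have := abs_real_inner_le_norm (w - s • u) u
      rw [hnu, mul_one] at this
      have := neg_le_of_abs_le this
      linarith [hg]
    linarith
  -- norm upper bound
  have hwhigh : ‖w‖ ≤ s + C := by
    calc ‖w‖ = ‖s • u + (w - s • u)‖ := by congr 1; abel
      _ ≤ ‖s • u‖ + ‖w - s • u‖ := norm_add_le _ _
      _ ≤ s + C := by
          rw [norm_smul, hnu, Real.norm_eq_abs, abs_of_pos (by linarith : (0:ℝ) < s), mul_one]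
          linarith [hg]
  -- cos estimate : c < ⟪w,u⟫/‖w‖
  have hq : c < inner ℝ w u / (‖w‖ * ‖u‖) := by
    rw [hnu, mul_one]
    rw [lt_div_iff₀ (by linarith : (0:ℝ) < ‖w‖)]
    have key : C * (1 + c) < s * (1 - c) := by
      rw [← sub_pos] at hc1
      have := (div_lt_iff₀ hc1).mp (by linarith : C * (1 + c) / (1 - c) < s)
      linarith
    nlinarith [hwhigh, hinner, hc0]
  have hq1 : inner ℝ w u / (‖w‖ * ‖u‖) ≤ 1 := by
    apply div_le_one_of_le₀ (real_inner_le_norm w u) (by positivity)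
  -- angle bound
  have hangle : InnerProductGeometry.angle w u < ε' := by
    rw [InnerProductGeometry.angle]
    have : ε' = Real.arccos c := by
      rw [hc, Real.arccos_cos (le_of_lt hε'0) (by linarith [Real.pi_pos, hε'le])]
    rw [this]
    exact Real.strictAntiOn_arccos ⟨by linarith, hc1.le⟩ ⟨by linarith, hq1⟩ hq
  have hangv : InnerProductGeometry.angle w v < ε := by
    have : InnerProductGeometry.angle w v = InnerProductGeometry.angle w u := by
      rw [hu, InnerProductGeometry.angle_smul_right_of_pos]
      exact inv_pos.mpr (norm_pos_iff.mpr hv)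
    rw [this]
    exact lt_of_lt_of_le hangle (min_le_left _ _)
  refine ⟨g, hg0, ?_, ?_⟩
  · rw [dist_eq_norm]
    simpa using hwR
  · exact lt_of_le_of_lt (min_le_left _ _) hangv
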